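/- Theorem 3 (unequal-variance case, majority-taking-all): let μ1, μ2 be real and σ1 > σ2 > 0. Then there exists p* > 0 such that for every p2 ∈ (0, p*), the inequality (1 − p2)·φ_{μ1,σ1}(x) > p2·φ_{μ2,σ2}(x) holds for all x ∈ ℝ (zero cross-over points of the posterior curves); consequently the zero-one-cost Bayesian classifier assigns every pattern to the majority class 1, and the Bayes error ∫_ℝ min((1 − p2)·φ_{μ1,σ1}(x), p2·φ_{μ2,σ2}(x)) dx equals p2, the entire probability of the rare class. -/

import Mathlib

open MeasureTheory

/-- Univariate Gaussian density with mean `μ` and standard deviation `σ`. -/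
noncomputable def gaussPdf (μ σ x : ℝ) : ℝ :=
  (1 / (σ * Real.sqrt (2 * Real.pi))) * Real.exp (-((x - μ) ^ 2) / (2 * σ ^ 2))

lemma gaussPdf_eq_gaussianPDFReal (μ σ : ℝ) (hσ : 0 < σ) (x : ℝ) :
    gaussPdf μ σ x = ProbabilityTheory.gaussianPDFReal μ (⟨σ ^ 2, sq_nonneg σ⟩ : NNReal) x := by
  unfold gaussPdf ProbabilityTheory.gaussianPDFReal
  have h1 : Real.sqrt (2 * Real.pi * σ ^ 2) = σ * Real.sqrt (2 * Real.pi) := by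
    rw [Real.sqrt_mul (by positivity), Real.sqrt_sq hσ.le]
    ring
  change _ = (Real.sqrt (2 * Real.pi * σ ^ 2))⁻¹ * Real.exp (-(x - μ) ^ 2 / (2 * σ ^ 2))
  rw [h1, one_div, neg_div]

lemma integral_gaussPdf (μ σ : ℝ) (hσ : 0 < σ) : ∫ x : ℝ, gaussPdf μ σ x = 1 := by
  have hv : (⟨σ ^ 2, sq_nonneg σ⟩ : NNReal) ≠ 0 := by
    intro h
    have := congrArg NNReal.toReal h
    change σ ^ 2 = 0 at this
    nlinarith
  rw [show (fun x => gaussPdf μ σ x) = ProbabilityTheory.gaussianPDFReal μ ⟨σ ^ 2, sq_nonneg σ⟩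
      from funext (gaussPdf_eq_gaussianPDFReal μ σ hσ)]
  exact ProbabilityTheory.integral_gaussianPDFReal_eq_one μ hv

set_option maxHeartbeats 1000000 in
/-- Theorem 3 (unequal-variance case, majority-taking-all): if `σ1 > σ2`, then
for all sufficiently small priors `p2` of class 2, the weighted density of
class 1 dominates everywhere (zero cross-over points), so the zero-one-cost
Bayesian classifier assigns everything to class 1 and its Bayes error equals
the whole rare-class probability `p2`. -/
theorem bayes_majority_taking_all_unequal_variance
    (μ1 μ2 σ1 σ2 : ℝ) (hσ2 : 0 < σ2) (hσ : σ2 < σ1) :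
    ∃ pstar : ℝ, 0 < pstar ∧ ∀ p2 : ℝ, p2 ∈ Set.Ioo (0 : ℝ) pstar →
      (∀ x : ℝ, p2 * gaussPdf μ2 σ2 x < (1 - p2) * gaussPdf μ1 σ1 x) ∧
      (∫ x : ℝ, min ((1 - p2) * gaussPdf μ1 σ1 x) (p2 * gaussPdf μ2 σ2 x))
        = p2 := by
  have hσ1 : 0 < σ1 := hσ2.trans hσ
  set t1 := σ1 ^ 2 with ht1
  set t2 := σ2 ^ 2 with ht2
  have ht1pos : 0 < t1 := by positivity
  have ht2pos : 0 < t2 := by positivity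
  have hd : 0 < t1 - t2 := by nlinarith
  set d := t1 - t2 with hdd
  set e := t1 * μ2 - t2 * μ1 with he
  set f := t1 * μ2 ^ 2 - t2 * μ1 ^ 2 with hf
  set m := (f - e ^ 2 / d) / (2 * t1 * t2) with hm
  -- key inequality : the exponent gap is bounded below by m
  have hkey : ∀ x : ℝ, m ≤ (x - μ2) ^ 2 / (2 * t2) - (x - μ1) ^ 2 / (2 * t1) := by
    intro x
    have hdiff : (x - μ2) ^ 2 / (2 * t2) - (x - μ1) ^ 2 / (2 * t1) - m
        = (d * x - e) ^ 2 / (2 * t1 * t2 * d) := by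
      rw [hm, he, hf, hdd]
      have hd0 : t1 - t2 ≠ 0 := ne_of_gt hd
      field_simp
      ring
    nlinarith [div_nonneg (sq_nonneg (d * x - e)) (by positivity : (0:ℝ) ≤ 2 * t1 * t2 * d)]
  set K := σ2 * Real.exp m with hK
  have hKpos : 0 < K := by positivity
  refine ⟨K / (σ1 + K), by positivity, ?_⟩
  intro p2 ⟨hp2pos, hp2lt⟩
  set pstar := K / (σ1 + K) with hps
  have hpslt1 : pstar < 1 := by
    rw [hps, div_lt_one (by positivity)]
    linarith
  have hp2lt1 : p2 < 1 := hp2lt.trans hpslt1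
  have hbal : pstar * σ1 = (1 - pstar) * K := by
    rw [hps]
    field_simp
    ring
  have hS : 0 < Real.sqrt (2 * Real.pi) := Real.sqrt_pos.mpr (by positivity)
  have hmain : ∀ x : ℝ, p2 * gaussPdf μ2 σ2 x < (1 - p2) * gaussPdf μ1 σ1 x := by
    intro x
    unfold gaussPdf
    rw [div_mul_eq_mul_div, div_mul_eq_mul_div, mul_div_assoc', mul_div_assoc',
      div_lt_div_iff₀ (by positivity) (by positivity)]
    -- reduce to : p2 * σ1 * exp(-E2) < (1-p2) * σ2 * exp(-E1) (times √(2π))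
    have hE2 : -((x - μ2) ^ 2) / (2 * σ2 ^ 2) = -((x - μ2) ^ 2 / (2 * t2)) := by
      rw [ht2]; ring
    have hE1 : -((x - μ1) ^ 2) / (2 * σ1 ^ 2) = -((x - μ1) ^ 2 / (2 * t1)) := by
      rw [ht1]; ring
    have step1 : p2 * σ1 * Real.exp (-((x - μ2) ^ 2 / (2 * t2)))
        < pstar * σ1 * Real.exp (-((x - μ2) ^ 2 / (2 * t2))) :=
      mul_lt_mul_of_pos_right (mul_lt_mul_of_pos_right hp2lt hσ1)
        (Real.exp_pos _)
    have step2 : pstar * σ1 * Real.exp (-((x - μ2) ^ 2 / (2 * t2)))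
        ≤ (1 - pstar) * σ2 * Real.exp (-((x - μ1) ^ 2 / (2 * t1))) := by
      have hle : m + -((x - μ2) ^ 2 / (2 * t2)) ≤ -((x - μ1) ^ 2 / (2 * t1)) := by
        have := hkey x; linarith
      have hexp := Real.exp_le_exp.mpr hle
      calc pstar * σ1 * Real.exp (-((x - μ2) ^ 2 / (2 * t2)))
          = (1 - pstar) * (σ2 * Real.exp (m + -((x - μ2) ^ 2 / (2 * t2)))) := by
            rw [hbal, hK, Real.exp_add]; ring
        _ ≤ (1 - pstar) * (σ2 * Real.exp (-((x - μ1) ^ 2 / (2 * t1)))) :=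
            mul_le_mul_of_nonneg_left
              (mul_le_mul_of_nonneg_left hexp hσ2.le) (by linarith)
        _ = (1 - pstar) * σ2 * Real.exp (-((x - μ1) ^ 2 / (2 * t1))) := by ring
    have step3 : (1 - pstar) * σ2 * Real.exp (-((x - μ1) ^ 2 / (2 * t1)))
        ≤ (1 - p2) * σ2 * Real.exp (-((x - μ1) ^ 2 / (2 * t1))) :=
      mul_le_mul_of_nonneg_right
        (mul_le_mul_of_nonneg_right (by linarith) hσ2.le) (Real.exp_pos _).le
    rw [hE1, hE2]
    have hc := step1.trans_le (step2.trans step3)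
    nlinarith [mul_lt_mul_of_pos_right hc hS]
  refine ⟨hmain, ?_⟩
  have hmin : ∀ x : ℝ, min ((1 - p2) * gaussPdf μ1 σ1 x) (p2 * gaussPdf μ2 σ2 x)
      = p2 * gaussPdf μ2 σ2 x := fun x => min_eq_right (hmain x).le
  simp_rw [hmin]
  rw [integral_const_mul, integral_gaussPdf μ2 σ2 hσ2, mul_one]
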